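/- Let E be a real inner product space and let f, g : E → ℝ be twice continuously differentiable with M-Lipschitz Hessians. Fix θ ∈ E and α > 0, and set θ̃_g = θ − α·∇g(θ) and θ̃_f = θ − α·∇f(θ). Let h(x) = ⟪∇f(x), ∇g(x)⟫. Then the symmetrized updated gradient satisfies ‖(∇f(θ̃_g) + ∇g(θ̃_f)) − (∇f(θ) + ∇g(θ)) + α·∇h(θ)‖ ≤ (M/2)·α²·(‖∇f(θ)‖² + ‖∇g(θ)‖²). In particular, averaged over the two orderings of the pair of tasks, one gradient step on one task followed by evaluating the other task's gradient equals the plain gradient minus α times the gradient of the gradient-alignment term, up to O(α²). -/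

import Mathlib

open RealInnerProductSpace
open InnerProductSpace Set

section aux

variable {E : Type*} [NormedAddCommGroup E] [InnerProductSpace ℝ E] [CompleteSpace E]

/-- Quadratic Taylor remainder for a vector-valued map with Lipschitz-type derivative bound. -/
lemma taylor_quad {F : Type*} [NormedAddCommGroup F] [NormedSpace ℝ F]
    {G : E → F} {M : ℝ} (hG : Differentiable ℝ G)
    (hLip : ∀ x y, ‖fderiv ℝ G x - fderiv ℝ G y‖ ≤ M * ‖x - y‖) (x v : E) :
    ‖G (x + v) - G x - fderiv ℝ G x v‖ ≤ M / 2 * ‖v‖ ^ 2 := by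
  set φ : ℝ → F := fun t => G (x + t • v) - G x - t • (fderiv ℝ G x v) with hφ
  have hd : ∀ t : ℝ, HasDerivAt φ ((fderiv ℝ G (x + t • v)) v - fderiv ℝ G x v) t := by
    intro t
    have h1 : HasDerivAt (fun t : ℝ => x + t • v) v t := by
      simpa using ((hasDerivAt_id t).smul_const v).const_add x
    have h2 : HasDerivAt (fun t : ℝ => G (x + t • v)) ((fderiv ℝ G (x + t • v)) v) t :=
      (hG (x + t • v)).hasFDerivAt.comp_hasDerivAt t h1
    have h3 := (h2.sub_const (G x)).sub ((hasDerivAt_id t).smul_const (fderiv ℝ G x v))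
    simp only [one_smul] at h3
    exact h3
  have hcont : ContinuousOn φ (Icc (0:ℝ) 1) := fun t _ => (hd t).continuousAt.continuousWithinAt
  have hder : ∀ t ∈ Ico (0:ℝ) 1,
      HasDerivWithinAt φ ((fderiv ℝ G (x + t • v)) v - fderiv ℝ G x v) (Ici t) t :=
    fun t _ => (hd t).hasDerivWithinAt
  have ha : ‖φ 0‖ ≤ M / 2 * ‖v‖ ^ 2 * (0:ℝ) ^ 2 := by simp [hφ]
  have hB : ∀ t : ℝ, HasDerivAt (fun t => M / 2 * ‖v‖ ^ 2 * t ^ 2) (M * ‖v‖ ^ 2 * t) t := by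
    intro t
    have := (hasDerivAt_pow 2 t).const_mul (M / 2 * ‖v‖ ^ 2)
    refine this.congr_deriv ?_
    push_cast
    norm_num
    ring
  have bound : ∀ t ∈ Ico (0:ℝ) 1,
      ‖(fderiv ℝ G (x + t • v)) v - fderiv ℝ G x v‖ ≤ M * ‖v‖ ^ 2 * t := by
    intro t ht
    have h1 : ‖(fderiv ℝ G (x + t • v)) v - fderiv ℝ G x v‖
        ≤ ‖fderiv ℝ G (x + t • v) - fderiv ℝ G x‖ * ‖v‖ := by
      rw [← ContinuousLinearMap.sub_apply]
      exact ContinuousLinearMap.le_opNorm _ _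
    have h2 : ‖fderiv ℝ G (x + t • v) - fderiv ℝ G x‖ ≤ M * (t * ‖v‖) := by
      have := hLip (x + t • v) x
      simpa [norm_smul, abs_of_nonneg ht.1] using this
    calc ‖(fderiv ℝ G (x + t • v)) v - fderiv ℝ G x v‖
        ≤ M * (t * ‖v‖) * ‖v‖ := h1.trans (mul_le_mul_of_nonneg_right h2 (norm_nonneg v))
      _ = M * ‖v‖ ^ 2 * t := by ring
  have key := image_norm_le_of_norm_deriv_right_le_deriv_boundary hcont hder ha hB bound
  have := key (right_mem_Icc.2 zero_le_one)
  simpa [hφ] using this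

end aux

section aux2

variable {E : Type*} [NormedAddCommGroup E] [InnerProductSpace ℝ E] [CompleteSpace E]

lemma gradient_eq_comp (f : E → ℝ) :
    gradient f = ⇑(toDual ℝ E).symm ∘ fderiv ℝ f := rfl

lemma differentiable_gradient {f : E → ℝ} (hf : ContDiff ℝ 2 f) :
    Differentiable ℝ (gradient f) := by
  rw [gradient_eq_comp]
  have h1 : ContDiff ℝ 1 (fderiv ℝ f) := hf.fderiv_right (le_refl 2)
  exact (toDual ℝ E).symm.toContinuousLinearEquiv.differentiable.comp
    (h1.differentiable one_ne_zero)

lemma inner_fderiv_gradient {f : E → ℝ} (x u w : E) :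
    ⟪fderiv ℝ (gradient f) x u, w⟫ = fderiv ℝ (fderiv ℝ f) x u w := by
  rw [gradient_eq_comp, LinearIsometryEquiv.comp_fderiv]
  simp only [ContinuousLinearMap.comp_apply, LinearIsometryEquiv.coe_coe'']
  exact toDual_symm_apply

lemma inner_fderiv_gradient_symm {f : E → ℝ} (hf : ContDiff ℝ 2 f) (x u w : E) :
    ⟪fderiv ℝ (gradient f) x u, w⟫ = ⟪fderiv ℝ (gradient f) x w, u⟫ := by
  rw [inner_fderiv_gradient, inner_fderiv_gradient]
  exact (hf.contDiffAt.isSymmSndFDerivAt (by simp)).eq u w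

lemma gradient_inner_eq {f g : E → ℝ} (hf : ContDiff ℝ 2 f) (hg : ContDiff ℝ 2 g) (θ : E) :
    gradient (fun x : E => ⟪gradient f x, gradient g x⟫) θ
      = fderiv ℝ (gradient f) θ (gradient g θ) + fderiv ℝ (gradient g) θ (gradient f θ) := by
  have hdf := differentiable_gradient hf
  have hdg := differentiable_gradient hg
  have hD : HasFDerivAt (fun x : E => ⟪gradient f x, gradient g x⟫)
      ((fderivInnerCLM ℝ (gradient f θ, gradient g θ)).comp
        ((fderiv ℝ (gradient f) θ).prod (fderiv ℝ (gradient g) θ))) θ :=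
    (hdf θ).hasFDerivAt.inner ℝ (hdg θ).hasFDerivAt
  have hgr := (hasFDerivAt_iff_hasGradientAt.mp hD).gradient
  rw [hgr]
  apply ext_inner_right ℝ
  intro w
  rw [toDual_symm_apply]
  simp only [ContinuousLinearMap.comp_apply, ContinuousLinearMap.prod_apply,
    fderivInnerCLM_apply, inner_add_left]
  rw [inner_fderiv_gradient_symm hf θ (gradient g θ) w,
    inner_fderiv_gradient_symm hg θ (gradient f θ) w]
  rw [real_inner_comm (gradient f θ) (fderiv ℝ (gradient g) θ w)]
  ring

end aux2

/-- **two-task symmetrized form of Theorem 1.** Let `f g : E → ℝ` be twice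
continuously differentiable with `M`-Lipschitz Hessians. Fix `θ` and `α > 0`, and set
`θ̃_g = θ − α·∇g(θ)`, `θ̃_f = θ − α·∇f(θ)`, and `h x = ⟪∇f(x), ∇g(x)⟫`. Then
`‖(∇f(θ̃_g) + ∇g(θ̃_f)) − (∇f(θ) + ∇g(θ)) + α·∇h(θ)‖ ≤ (M/2)·α²·(‖∇f(θ)‖² + ‖∇g(θ)‖²)`. -/
theorem symmetrized_updated_gradient_alignment
    {E : Type*} [NormedAddCommGroup E] [InnerProductSpace ℝ E] [CompleteSpace E]
    (f g : E → ℝ) (M : ℝ) (hf : ContDiff ℝ 2 f) (hg : ContDiff ℝ 2 g)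
    (hLipf : ∀ x y : E,
      ‖fderiv ℝ (gradient f) x - fderiv ℝ (gradient f) y‖ ≤ M * ‖x - y‖)
    (hLipg : ∀ x y : E,
      ‖fderiv ℝ (gradient g) x - fderiv ℝ (gradient g) y‖ ≤ M * ‖x - y‖)
    (θ : E) (α : ℝ) (hα : 0 < α) :
    ‖(gradient f (θ - α • gradient g θ) + gradient g (θ - α • gradient f θ))
        - (gradient f θ + gradient g θ)
        + α • gradient (fun x : E => ⟪gradient f x, gradient g x⟫) θ‖
      ≤ (M / 2) * α ^ 2 * (‖gradient f θ‖ ^ 2 + ‖gradient g θ‖ ^ 2) := by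
  have t1 := taylor_quad (differentiable_gradient hf) hLipf θ (-(α • gradient g θ))
  have t2 := taylor_quad (differentiable_gradient hg) hLipg θ (-(α • gradient f θ))
  have e1 : θ - α • gradient g θ = θ + -(α • gradient g θ) := by abel
  have e2 : θ - α • gradient f θ = θ + -(α • gradient f θ) := by abel
  have expand :
      (gradient f (θ - α • gradient g θ) + gradient g (θ - α • gradient f θ))
        - (gradient f θ + gradient g θ)
        + α • gradient (fun x : E => ⟪gradient f x, gradient g x⟫) θ
      = (gradient f (θ + -(α • gradient g θ)) - gradient f θ
          - fderiv ℝ (gradient f) θ (-(α • gradient g θ)))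
        + (gradient g (θ + -(α • gradient f θ)) - gradient g θ
          - fderiv ℝ (gradient g) θ (-(α • gradient f θ))) := by
    rw [gradient_inner_eq hf hg θ, e1, e2]
    simp only [map_neg, ContinuousLinearMap.map_smul, smul_add]
    abel
  rw [expand]
  have hnorm : ∀ w : E, ‖-(α • w)‖ ^ 2 = α ^ 2 * ‖w‖ ^ 2 := by
    intro w
    rw [norm_neg, norm_smul, Real.norm_eq_abs, mul_pow, sq_abs]
  calc ‖_ + _‖ ≤ M / 2 * ‖-(α • gradient g θ)‖ ^ 2 + M / 2 * ‖-(α • gradient f θ)‖ ^ 2 :=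
        (norm_add_le _ _).trans (add_le_add t1 t2)
    _ = (M / 2) * α ^ 2 * (‖gradient f θ‖ ^ 2 + ‖gradient g θ‖ ^ 2) := by
        rw [hnorm, hnorm]; ring
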